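/- Let d ≥ 2, K ⊂ ℝ^d compact contained in B_ρ(0), and let A(x) = (a_{ij}(x)) be a symmetric measurable matrix field and φ ∈ L¹_loc(ℝ^d) with φ > 0 a.e. Suppose ‖A(x)‖ φ(x) ≤ Φ(|x|) for all x outside K, where ‖A(x)‖ is the Frobenius norm and Φ is measurable with s^{1-d}/Φ(s) locally integrable on (ρ, ∞). Define a_n = ∫_{B_n(0)\B_ρ(0)} |y|^{2-2d}/Φ(|y|) dy and u_n(x) = ψ_n(|x|) where ψ_n(r) = 1 for r ≤ ρ, ψ_n(r) = 1 - (d·vol_d(B_1(0))/a_n)∫_ρ^r s^{1-d}/Φ(s) ds for ρ ≤ r ≤ n, and 0 otherwise. Then ∑_{i,j} ∫_{ℝ^d} a_{ij}(x) ∂_i u_n(x) ∂_j u_n(x) φ(x) dx ≤ d²·vol_d(B_1(0))²/a_n. -/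

import Mathlib

open MeasureTheory Filter Set intervalIntegral

lemma aux_meas_rpow {α : Type*} [MeasurableSpace α] {f : α → ℝ} (hf : Measurable f)
    (hf0 : ∀ a, 0 ≤ f a) (c : ℝ) : Measurable fun a => f a ^ c := by
  have heq : (fun a => f a ^ c) = fun a =>
      if f a = 0 then (if c = 0 then 1 else 0) else Real.exp (Real.log (f a) * c) := by
    funext a
    by_cases h : f a = 0
    · by_cases hc : c = 0 <;> simp [h, hc, Real.rpow_zero, Real.zero_rpow]
    · rw [Real.rpow_def_of_pos (lt_of_le_of_ne (hf0 a) (Ne.symm h))]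
      simp [h]
  rw [heq]
  exact Measurable.ite (hf (measurableSet_singleton 0)) measurable_const
    (Real.measurable_exp.comp ((Real.measurable_log.comp hf).mul_const c))

lemma aux_cs_matrix (d : ℕ) (A : Matrix (Fin d) (Fin d) ℝ) (x : Fin d → ℝ) :
    ∑ i, ∑ j, A i j * x i * x j ≤ Real.sqrt (∑ i, ∑ j, A i j ^ 2) * (∑ i, x i ^ 2) := by
  set S := ∑ i, ∑ j, A i j ^ 2 with hS
  set T := ∑ i, x i ^ 2 with hT
  have hT0 : 0 ≤ T := Finset.sum_nonneg fun i _ => sq_nonneg _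
  have hS0 : 0 ≤ S := Finset.sum_nonneg fun i _ => Finset.sum_nonneg fun j _ => sq_nonneg _
  set w : Fin d → ℝ := fun i => ∑ j, A i j * x j with hw
  have h1 : ∑ i, ∑ j, A i j * x i * x j = ∑ i, x i * w i := by
    refine Finset.sum_congr rfl fun i _ => ?_
    rw [hw, Finset.mul_sum]
    exact Finset.sum_congr rfl fun j _ => by ring
  have h2 : (∑ i, x i * w i) ^ 2 ≤ T * ∑ i, w i ^ 2 :=
    Finset.sum_mul_sq_le_sq_mul_sq _ _ _
  have h3 : ∑ i, w i ^ 2 ≤ S * T := by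
    have hrow : ∀ i : Fin d, w i ^ 2 ≤ (∑ j, A i j ^ 2) * T := by
      intro i
      have := Finset.sum_mul_sq_le_sq_mul_sq Finset.univ (fun j => A i j) x
      simpa [hw, hT] using this
    calc ∑ i, w i ^ 2 ≤ ∑ i, (∑ j, A i j ^ 2) * T := Finset.sum_le_sum fun i _ => hrow i
      _ = S * T := by rw [hS, Finset.sum_mul]
  have h4 : (∑ i, x i * w i) ^ 2 ≤ S * T ^ 2 := by
    calc (∑ i, x i * w i) ^ 2 ≤ T * ∑ i, w i ^ 2 := h2
      _ ≤ T * (S * T) := by nlinarith [h3]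
      _ = S * T ^ 2 := by ring
  have h5 : ∑ i, x i * w i ≤ Real.sqrt (S * T ^ 2) :=
    (le_abs_self _).trans (Real.abs_le_sqrt h4)
  rw [h1]
  calc ∑ i, x i * w i ≤ Real.sqrt (S * T ^ 2) := h5
    _ = Real.sqrt S * T := by rw [Real.sqrt_mul hS0, Real.sqrt_sq hT0]

theorem stmt12
    (d : ℕ) (hd : 2 ≤ d)
    (ρ : ℝ) (hρ : 0 < ρ)
    (K : Set (EuclideanSpace ℝ (Fin d))) (hK : IsCompact K)
    (hKρ : K ⊆ Metric.ball (0 : EuclideanSpace ℝ (Fin d)) ρ)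
    (A : EuclideanSpace ℝ (Fin d) → Matrix (Fin d) (Fin d) ℝ)
    (hAsymm : ∀ x, (A x).IsSymm)
    (hAm : ∀ i j, Measurable (fun x => A x i j))
    (φ : EuclideanSpace ℝ (Fin d) → ℝ) (hφloc : LocallyIntegrable φ volume)
    (hφpos : ∀ᵐ x ∂volume, 0 < φ x)
    (Φ : ℝ → ℝ) (hΦm : Measurable Φ)
    (hbound : ∀ x ∉ K, Real.sqrt (∑ i, ∑ j, (A x i j) ^ 2) * φ x ≤ Φ ‖x‖)
    (hΦloc : LocallyIntegrableOn (fun s => s ^ (1 - (d:ℝ)) / Φ s) (Set.Ioi ρ) volume)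
    (an : ℕ → ℝ)
    (han : ∀ n : ℕ, an n =
      ∫ y in {y : EuclideanSpace ℝ (Fin d) | ρ ≤ ‖y‖ ∧ ‖y‖ ≤ (n:ℝ)},
        ‖y‖ ^ (2 - 2 * (d:ℝ)) / Φ ‖y‖)
    (hanpos : ∀ n : ℕ, ρ < n → 0 < an n)
    (V : ℝ) (hV : V = (volume (Metric.ball (0 : EuclideanSpace ℝ (Fin d)) 1)).toReal)
    (u : ℕ → EuclideanSpace ℝ (Fin d) → ℝ)
    (hu : ∀ n : ℕ, ∀ x : EuclideanSpace ℝ (Fin d), u n x =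
      if ‖x‖ ≤ ρ then 1
      else if ‖x‖ ≤ (n:ℝ) then
        1 - ((d:ℝ) * V / an n) * ∫ s in ρ..‖x‖, s ^ (1 - (d:ℝ)) / Φ s
      else 0)
    (du : ℕ → EuclideanSpace ℝ (Fin d) → EuclideanSpace ℝ (Fin d))
    (hdu : ∀ n : ℕ, ∀ x : EuclideanSpace ℝ (Fin d), du n x =
      if ρ < ‖x‖ ∧ ‖x‖ < (n:ℝ) then
        (-((d:ℝ) * V / an n) * (‖x‖ ^ (1 - (d:ℝ)) / Φ ‖x‖) / ‖x‖) • x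
      else 0) :
    ∀ n : ℕ, ρ < n →
      ∑ i, ∑ j, ∫ x : EuclideanSpace ℝ (Fin d),
          A x i j * du n x i * du n x j * φ x ≤ (d:ℝ) ^ 2 * V ^ 2 / an n := by
  intro n hn
  have hanp : 0 < an n := hanpos n hn
  set C : ℝ := (d:ℝ) * V / an n with hC
  set Ann : Set (EuclideanSpace ℝ (Fin d)) := {y | ρ ≤ ‖y‖ ∧ ‖y‖ ≤ (n:ℝ)} with hAnnDef
  have hAnnm : MeasurableSet Ann := by
    have : Ann = (fun x : EuclideanSpace ℝ (Fin d) => ‖x‖) ⁻¹' (Set.Icc ρ n) := rfl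
    rw [this]; exact measurable_norm measurableSet_Icc
  set h : EuclideanSpace ℝ (Fin d) → ℝ := fun y => ‖y‖ ^ (2 - 2*(d:ℝ)) / Φ ‖y‖ with hh
  have hanval : an n = ∫ y in Ann, h y := han n
  have hIntOn : IntegrableOn h Ann := by
    by_contra hcon
    rw [hanval, integral_undef hcon] at hanp
    exact lt_irrefl 0 hanp
  set g : EuclideanSpace ℝ (Fin d) → ℝ := fun x => C^2 * Ann.indicator h x with hg
  have hgInt : Integrable g := ((integrable_indicator_iff hAnnm).2 hIntOn).const_mul _
  have hgval : ∫ x, g x = C^2 * an n := by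
    have : (∫ x, g x) = ∫ x, C^2 * Ann.indicator h x := by simp only [hg]
    rw [this, MeasureTheory.integral_const_mul, MeasureTheory.integral_indicator hAnnm, ← hanval]
  -- measurability of coordinates of du
  have hdum : ∀ i : Fin d, Measurable (fun x => du n x i) := by
    intro i
    have heq : (fun x => du n x i) = fun x : EuclideanSpace ℝ (Fin d) =>
        if ρ < ‖x‖ ∧ ‖x‖ < (n:ℝ) then (-C * (‖x‖ ^ (1 - (d:ℝ)) / Φ ‖x‖) / ‖x‖) * x i
        else 0 := by
      funext x
      rw [hdu n x]
      by_cases hx : ρ < ‖x‖ ∧ ‖x‖ < (n:ℝ)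
      · rw [if_pos hx, if_pos hx]
        simp [PiLp.smul_apply, smul_eq_mul, hC]
      · rw [if_neg hx, if_neg hx]
        simp
    rw [heq]
    have hSm : MeasurableSet {x : EuclideanSpace ℝ (Fin d) | ρ < ‖x‖ ∧ ‖x‖ < (n:ℝ)} := by
      have : {x : EuclideanSpace ℝ (Fin d) | ρ < ‖x‖ ∧ ‖x‖ < (n:ℝ)} =
          (fun x : EuclideanSpace ℝ (Fin d) => ‖x‖) ⁻¹' (Set.Ioo ρ n) := rfl
      rw [this]; exact measurable_norm measurableSet_Ioo
    exact Measurable.ite hSm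
      (((measurable_const.mul
        ((aux_meas_rpow measurable_norm (fun _ => norm_nonneg _) _).div
          (hΦm.comp measurable_norm))).div measurable_norm).mul ((continuous_apply i).comp (by fun_prop : Continuous (fun x : EuclideanSpace ℝ (Fin d) => x.ofLp))).measurable)
      measurable_const
  have hφm := hφloc.aestronglyMeasurable
  have hfm : ∀ i j : Fin d,
      AEStronglyMeasurable (fun x => A x i j * du n x i * du n x j * φ x) volume :=
    fun i j => ((((hAm i j).mul (hdum i)).mul (hdum j)).aestronglyMeasurable).mul hφm
  -- pointwise bounds
  have hptwise : ∀ x : EuclideanSpace ℝ (Fin d), 0 < φ x →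
      (∀ i j : Fin d, |A x i j * du n x i * du n x j * φ x| ≤ g x) ∧
      ((∑ i, ∑ j, A x i j * du n x i * du n x j * φ x) ≤ g x) := by
    intro x hφx
    by_cases hxK : x ∈ K
    · have hxρ : ‖x‖ < ρ := by
        have := hKρ hxK
        rwa [Metric.mem_ball, dist_zero_right] at this
      have hdu0 : du n x = 0 := by
        rw [hdu n x, if_neg]
        exact fun hc => absurd hc.1 (not_lt.2 hxρ.le)
      have hg0 : g x = 0 := by
        have hmem : x ∉ Ann := fun hmem => absurd hmem.1 (not_le.2 hxρ)
        simp [hg, Set.indicator_of_notMem hmem]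
      constructor
      · intro i j; simp [hdu0, hg0]
      · simp [hdu0, hg0]
    · have hΦnn : 0 ≤ Φ ‖x‖ :=
        le_trans (mul_nonneg (Real.sqrt_nonneg _) hφx.le) (hbound x hxK)
      by_cases hxS : ρ < ‖x‖ ∧ ‖x‖ < (n:ℝ)
      · -- the interesting case
        have hr : 0 < ‖x‖ := hρ.trans hxS.1
        set r : ℝ := ‖x‖ with hrdef
        set c : ℝ := -C * (r ^ (1 - (d:ℝ)) / Φ r) / r with hcdef
        have hdux : du n x = c • x := by rw [hdu n x, if_pos hxS]
        have hxAnn : x ∈ Ann := ⟨hxS.1.le, hxS.2.le⟩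
        have hgx : g x = C^2 * (r ^ (2 - 2*(d:ℝ)) / Φ r) := by
          simp only [hg, Set.indicator_of_mem hxAnn, hh]
          rfl
        set N : ℝ := Real.sqrt (∑ i, ∑ j, A x i j ^ 2) with hN
        have hNφ : N * φ x ≤ Φ r := hbound x hxK
        have hNnn : 0 ≤ N := Real.sqrt_nonneg _
        have hkey : c ^ 2 * r ^ 2 * Φ r = C^2 * (r ^ (2 - 2*(d:ℝ)) / Φ r) := by
          by_cases hF : Φ r = 0
          · simp [hcdef, hF]
          · have hrpow2 : (r ^ (1 - (d:ℝ)))^2 = r ^ (2 - 2*(d:ℝ)) := by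
              rw [← Real.rpow_natCast (r ^ (1 - (d:ℝ))) 2, ← Real.rpow_mul hr.le]
              norm_num
              ring_nf
            rw [hcdef]
            field_simp
            rw [hrpow2, show (1 - (d:ℝ)) * 2 = 2 - 2*(d:ℝ) by ring]
        have hsumsq : ∑ i, x i ^ 2 = r ^ 2 := by
          rw [hrdef, EuclideanSpace.norm_eq,
            Real.sq_sqrt (Finset.sum_nonneg fun i _ => sq_nonneg _)]
          simp [Real.norm_eq_abs, sq_abs]
        have hcoord : ∀ i : Fin d, |x i| ≤ r := by
          intro i
          have h1 : x i ^ 2 ≤ ∑ j, x j ^ 2 :=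
            Finset.single_le_sum (f := fun j => x j ^ 2) (fun _ _ => sq_nonneg _)
              (Finset.mem_univ i)
          have h2 := Real.abs_le_sqrt (h1.trans_eq hsumsq)
          rwa [Real.sqrt_sq hr.le] at h2
        have hAij : ∀ i j : Fin d, |A x i j| ≤ N := by
          intro i j
          have h1 : A x i j ^ 2 ≤ ∑ j', A x i j' ^ 2 :=
            Finset.single_le_sum (f := fun j' => A x i j' ^ 2) (fun _ _ => sq_nonneg _)
              (Finset.mem_univ j)
          have h2 : ∑ j', A x i j' ^ 2 ≤ ∑ i', ∑ j', A x i' j' ^ 2 :=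
            Finset.single_le_sum (f := fun i' => ∑ j', A x i' j' ^ 2)
              (fun _ _ => Finset.sum_nonneg fun _ _ => sq_nonneg _) (Finset.mem_univ i)
          exact Real.abs_le_sqrt (h1.trans h2)
        have hcoordmul : ∀ i : Fin d, du n x i = c * x i := by
          intro i; rw [hdux]; simp [PiLp.smul_apply, smul_eq_mul]
        have hfinal : c ^ 2 * r ^ 2 * (N * φ x) ≤ g x := by
          rw [hgx, ← hkey]
          have : 0 ≤ c ^ 2 * r ^ 2 := mul_nonneg (sq_nonneg _) (sq_nonneg _)
          nlinarith [hNφ]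
        constructor
        · intro i j
          rw [hcoordmul i, hcoordmul j]
          have habs : |A x i j * (c * x i) * (c * x j) * φ x|
              = |A x i j| * (|c| * |x i|) * (|c| * |x j|) * φ x := by
            rw [abs_mul, abs_mul, abs_mul, abs_mul, abs_mul, abs_of_pos hφx]
          rw [habs]
          have hstep : |A x i j| * (|c| * |x i|) * (|c| * |x j|) * φ x
              ≤ N * (|c| * r) * (|c| * r) * φ x := by
            have h1 : |c| * |x i| ≤ |c| * r :=
              mul_le_mul_of_nonneg_left (hcoord i) (abs_nonneg c)
            have h2 : |c| * |x j| ≤ |c| * r :=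
              mul_le_mul_of_nonneg_left (hcoord j) (abs_nonneg c)
            have s1 : |A x i j| * (|c| * |x i|) ≤ N * (|c| * r) :=
              mul_le_mul (hAij i j) h1 (by positivity) hNnn
            have s2 : |A x i j| * (|c| * |x i|) * (|c| * |x j|) ≤ N * (|c| * r) * (|c| * r) :=
              mul_le_mul s1 h2 (by positivity) (by positivity)
            exact mul_le_mul_of_nonneg_right s2 hφx.le
          refine hstep.trans ?_
          have heq2 : N * (|c| * r) * (|c| * r) * φ x = c ^ 2 * r ^ 2 * (N * φ x) := by
            rw [← sq_abs c]; ring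
          rw [heq2]; exact hfinal
        · have hsumeq : (∑ i, ∑ j, A x i j * du n x i * du n x j * φ x)
              = c ^ 2 * φ x * ∑ i, ∑ j, A x i j * x i * x j := by
            rw [Finset.mul_sum]
            refine Finset.sum_congr rfl fun i _ => ?_
            rw [Finset.mul_sum]
            refine Finset.sum_congr rfl fun j _ => ?_
            rw [hcoordmul i, hcoordmul j]; ring
          rw [hsumeq]
          have hcs := aux_cs_matrix d (A x) (fun i => x i)
          have hbound2 : c ^ 2 * φ x * ∑ i, ∑ j, A x i j * x i * x j
              ≤ c ^ 2 * φ x * (N * r ^ 2) := by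
            have hcφ : 0 ≤ c ^ 2 * φ x := mul_nonneg (sq_nonneg _) hφx.le
            refine mul_le_mul_of_nonneg_left ?_ hcφ
            calc ∑ i, ∑ j, A x i j * x i * x j
                ≤ N * (∑ i, x i ^ 2) := hcs
              _ = N * r ^ 2 := by rw [hsumsq]
          refine hbound2.trans ?_
          have : c ^ 2 * φ x * (N * r ^ 2) = c ^ 2 * r ^ 2 * (N * φ x) := by ring
          rw [this]; exact hfinal
      · -- outside the open annulus: du = 0, g ≥ 0
        have hdu0 : du n x = 0 := by rw [hdu n x, if_neg hxS]
        have hg0 : 0 ≤ g x := by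
          rw [hg]
          refine mul_nonneg (sq_nonneg _) ?_
          by_cases hmem : x ∈ Ann
          · rw [Set.indicator_of_mem hmem, hh]
            exact div_nonneg (Real.rpow_nonneg (norm_nonneg _) _) hΦnn
          · rw [Set.indicator_of_notMem hmem]
        constructor
        · intro i j; simpa [hdu0] using hg0
        · simpa [hdu0] using hg0
  -- integrability of each term
  have hfint : ∀ i j : Fin d,
      Integrable (fun x => A x i j * du n x i * du n x j * φ x) := by
    intro i j
    refine hgInt.mono' (hfm i j) ?_
    filter_upwards [hφpos] with x hx
    rw [Real.norm_eq_abs]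
    exact (hptwise x hx).1 i j
  -- put it together
  have hswap : (∑ i, ∑ j, ∫ x : EuclideanSpace ℝ (Fin d),
        A x i j * du n x i * du n x j * φ x)
      = ∫ x : EuclideanSpace ℝ (Fin d), ∑ i, ∑ j, A x i j * du n x i * du n x j * φ x := by
    calc ∑ i, ∑ j, ∫ x : EuclideanSpace ℝ (Fin d), A x i j * du n x i * du n x j * φ x
        = ∑ i, ∫ x : EuclideanSpace ℝ (Fin d), ∑ j, A x i j * du n x i * du n x j * φ x :=
          Finset.sum_congr rfl fun i _ =>
            (integral_finset_sum _ fun j _ => hfint i j).symm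
      _ = ∫ x : EuclideanSpace ℝ (Fin d), ∑ i, ∑ j, A x i j * du n x i * du n x j * φ x :=
          (integral_finset_sum _ fun i _ => integrable_finset_sum _ fun j _ => hfint i j).symm
  rw [hswap]
  have hle : (∫ x : EuclideanSpace ℝ (Fin d),
      ∑ i, ∑ j, A x i j * du n x i * du n x j * φ x) ≤ ∫ x, g x := by
    refine integral_mono_ae
      (integrable_finset_sum _ fun i _ => integrable_finset_sum _ fun j _ => hfint i j)
      hgInt ?_
    filter_upwards [hφpos] with x hx
    exact (hptwise x hx).2
  refine hle.trans ?_
  rw [hgval, hC]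
  rw [div_pow, div_mul_eq_mul_div, div_le_div_iff₀ (by positivity) hanp]
  ring_nf
  exact le_rfl
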